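/- Let D be a digraph on n ≥ 3 vertices containing a directed path P := x₁x₂…x_m with 2 ≤ m ≤ n−1, and let x be a vertex not contained in this path. If d(x,P) ≥ m+1 and moreover x x₁ ∉ A(D) or x_m x ∉ A(D), then there exists an index i with 1 ≤ i ≤ m−1 such that both x_i x and x x_{i+1} are arcs of D; that is, D contains the directed path x₁x₂…x_i x x_{i+1}…x_m of length m (x can be inserted into P). -/
import Mathlib


variable {V : Type*}

/-- Rotate an index of `Fin m` forward by `k` steps (indices mod `m`). -/
def finRot {m : ℕ} (i : Fin m) (k : ℕ) : Fin m :=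
  ⟨(i.val + k) % m, Nat.mod_lt _ (Nat.lt_of_le_of_lt (Nat.zero_le i.val) i.isLt)⟩

/-- `c : Fin k → V` is a directed cycle of length `k`: distinct vertices with an
arc from each vertex to the next one (cyclically). -/
def IsCycle (A : V → V → Prop) {k : ℕ} (c : Fin k → V) : Prop :=
  Function.Injective c ∧ ∀ i, A (c i) (c (finRot i 1))

/-- Out-degree of `x`. -/
def outDeg [Fintype V] (A : V → V → Prop) [DecidableRel A] (x : V) : ℕ :=
  (Finset.univ.filter fun y => A x y).card

/-- In-degree of `x`. -/
def inDeg [Fintype V] (A : V → V → Prop) [DecidableRel A] (x : V) : ℕ :=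
  (Finset.univ.filter fun y => A y x).card

/-- Degree of `x`. -/
def deg [Fintype V] (A : V → V → Prop) [DecidableRel A] (x : V) : ℕ :=
  outDeg A x + inDeg A x

/-- Out-degree of `x` into the set `S`. -/
def outDegOn (A : V → V → Prop) [DecidableRel A] (x : V) (S : Finset V) : ℕ :=
  (S.filter fun y => A x y).card

/-- In-degree of `x` from the set `S`. -/
def inDegOn (A : V → V → Prop) [DecidableRel A] (x : V) (S : Finset V) : ℕ :=
  (S.filter fun y => A y x).card

/-- Degree of `x` with respect to the set `S`. -/
def degOn (A : V → V → Prop) [DecidableRel A] (x : V) (S : Finset V) : ℕ :=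
  outDegOn A x S + inDegOn A x S

/-- The set of indices of the subpath of a cycle on `Fin m` that goes from
index `β` to index `α` (inclusive), following the orientation of the cycle. -/
def cycSeg {m : ℕ} (β α : Fin m) : Finset (Fin m) :=
  (Finset.range ((α.val + m - β.val) % m + 1)).image (finRot β)

/-- Lemma 2 (ii). If a digraph on `n ≥ 3` vertices contains a path
`x₁x₂…x_m` (`2 ≤ m ≤ n-1`) and a vertex `x` off the path with `d(x,P) ≥ m+1`, and
moreover `x x₁ ∉ A(D)` or `x_m x ∉ A(D)`, then `x` can be inserted into the path. -/
theorem insertion_of_degree_ge_add_one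
    [Fintype V] [DecidableEq V] (A : V → V → Prop) [DecidableRel A]
    (hirr : ∀ v : V, ¬ A v v)
    (hn : 3 ≤ Fintype.card V)
    (m : ℕ) (hm2 : 2 ≤ m) (hm : m ≤ Fintype.card V - 1)
    (p : Fin m → V) (hinj : Function.Injective p)
    (hpath : ∀ i j : Fin m, (j : ℕ) = (i : ℕ) + 1 → A (p i) (p j))
    (x : V) (hx : ∀ i : Fin m, x ≠ p i)
    (hdeg : m + 1 ≤ degOn A x (Finset.image p Finset.univ))
    (hend : ¬ A x (p ⟨0, by omega⟩) ∨ ¬ A (p ⟨m - 1, by omega⟩) x) :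
    ∃ i j : Fin m, (j : ℕ) = (i : ℕ) + 1 ∧ A (p i) x ∧ A x (p j) := by
  by_contra hcon
  push_neg at hcon
  classical
  set S := Finset.image p Finset.univ with hS
  have hcard : ∀ q : V → Prop, [DecidablePred q] → (S.filter q).card =
      ∑ i ∈ Finset.range m, if h : i < m then (if q (p ⟨i, h⟩) then 1 else 0) else 0 := by
    intro q _
    rw [hS, Finset.filter_image, Finset.card_image_of_injective _ hinj, Finset.card_filter]
    rw [Finset.sum_congr rfl (fun i _ => rfl), ← Fin.sum_univ_eq_sum_range
      (fun i => if h : i < m then (if q (p ⟨i, h⟩) then 1 else 0) else 0) m]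
    exact Finset.sum_congr rfl (fun i _ => by simp [i.isLt])
  set a : ℕ → ℕ := fun i => if h : i < m then (if A x (p ⟨i, h⟩) then 1 else 0) else 0 with ha
  set b : ℕ → ℕ := fun i => if h : i < m then (if A (p ⟨i, h⟩) x then 1 else 0) else 0 with hb
  have hout : outDegOn A x S = ∑ i ∈ Finset.range m, a i := hcard _
  have hin : inDegOn A x S = ∑ i ∈ Finset.range m, b i := hcard _
  obtain ⟨m', rfl⟩ : ∃ m', m = m' + 1 := ⟨m - 1, by omega⟩
  have hsa : ∑ i ∈ Finset.range (m' + 1), a i = (∑ i ∈ Finset.range m', a (i + 1)) + a 0 :=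
    Finset.sum_range_succ' a m'
  have hsb : ∑ i ∈ Finset.range (m' + 1), b i = (∑ i ∈ Finset.range m', b i) + b m' :=
    Finset.sum_range_succ b m'
  have hmid : ∀ i ∈ Finset.range m', b i + a (i + 1) ≤ 1 := by
    intro i hi
    rw [Finset.mem_range] at hi
    have h1 : i < m' + 1 := by omega
    have h2 : i + 1 < m' + 1 := by omega
    simp only [ha, hb, dif_pos h1, dif_pos h2]
    by_cases hbi : A (p ⟨i, h1⟩) x
    · by_cases hai : A x (p ⟨i + 1, h2⟩)
      · exact absurd hai (hcon ⟨i, h1⟩ ⟨i + 1, h2⟩ rfl hbi)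
      · rw [if_pos hbi, if_neg hai]
    · rw [if_neg hbi]
      split <;> omega
  have hmids : (∑ i ∈ Finset.range m', b i) + (∑ i ∈ Finset.range m', a (i + 1)) ≤ m' := by
    calc (∑ i ∈ Finset.range m', b i) + (∑ i ∈ Finset.range m', a (i + 1))
        = ∑ i ∈ Finset.range m', (b i + a (i + 1)) := (Finset.sum_add_distrib).symm
      _ ≤ ∑ _i ∈ Finset.range m', 1 := Finset.sum_le_sum hmid
      _ = m' := by simp
  have hends : a 0 + b m' ≤ 1 := by
    have h0 : (0 : ℕ) < m' + 1 := by omega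
    have hmm : m' < m' + 1 := by omega
    simp only [ha, hb, dif_pos h0, dif_pos hmm]
    rcases hend with h | h
    · rw [if_neg h]
      split <;> omega
    · have h' : ¬ A (p ⟨m', hmm⟩) x := h
      rw [if_neg h']
      split <;> omega
  have : degOn A x S ≤ m' + 1 := by
    rw [degOn, hout, hin, hsa, hsb]
    omega
  omega
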